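/- If W(t) = U(t)D(t)V(t)ᵀ is an analytic singular value decomposition of a smooth matrix path, then the derivative of the i-th singular value satisfies σ̇ᵢ(t) = uᵢ(t)ᵀ Ẇ(t) vᵢ(t), where uᵢ, vᵢ are the corresponding left and right singular vectors. -/

import Mathlib

open scoped Matrix

attribute [local instance] Matrix.frobeniusNormedAddCommGroup Matrix.frobeniusNormedSpace

lemma hasDerivAt_entry {p q : ℕ} {A : ℝ → Matrix (Fin p) (Fin q) ℝ}
    {A' : Matrix (Fin p) (Fin q) ℝ} {t : ℝ} (h : HasDerivAt A A' t)
    (a : Fin p) (b : Fin q) :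
    HasDerivAt (fun s => A s a b) (A' a b) t := by
  let L : Matrix (Fin p) (Fin q) ℝ →ₗ[ℝ] ℝ :=
    { toFun := fun M => M a b, map_add' := fun _ _ => rfl, map_smul' := fun _ _ => rfl }
  exact (L.toContinuousLinearMap.hasFDerivAt (x := A t)).comp_hasDerivAt t h

/-- For a smooth (analytic) SVD `W(t) = U(t) D(t) V(t)ᵀ` of a smooth matrix path,
the derivative of the `i`-th singular value satisfies
`σ̇ᵢ(t₀) = uᵢ(t₀)ᵀ Ẇ(t₀) vᵢ(t₀)`, where `uᵢ, vᵢ` are the corresponding left and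
right singular vectors (columns of `U` and `V`, which have orthonormal columns). -/
theorem stmt13 {m n k : ℕ}
    (W : ℝ → Matrix (Fin m) (Fin n) ℝ) (U : ℝ → Matrix (Fin m) (Fin k) ℝ)
    (σ : ℝ → Fin k → ℝ) (V : ℝ → Matrix (Fin n) (Fin k) ℝ)
    (t₀ : ℝ) (W' : Matrix (Fin m) (Fin n) ℝ) (U' : Matrix (Fin m) (Fin k) ℝ)
    (σ' : Fin k → ℝ) (V' : Matrix (Fin n) (Fin k) ℝ)
    (hsvd : ∀ t, W t = U t * Matrix.diagonal (σ t) * (V t)ᵀ)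
    (hUorth : ∀ t, (U t)ᵀ * U t = 1) (hVorth : ∀ t, (V t)ᵀ * V t = 1)
    (hW : HasDerivAt W W' t₀) (hU : HasDerivAt U U' t₀) (hV : HasDerivAt V V' t₀)
    (hσ : ∀ i, HasDerivAt (fun t => σ t i) (σ' i) t₀) :
    ∀ i, σ' i = (fun a => U t₀ a i) ⬝ᵥ W'.mulVec (fun b => V t₀ b i) := by
  intro i
  -- key: σ t i = ∑ a ∑ b, U t a i * (W t a b * V t b i)
  have hD : ∀ t, (U t)ᵀ * W t * V t = Matrix.diagonal (σ t) := by
    intro t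
    rw [hsvd t, ← Matrix.mul_assoc, ← Matrix.mul_assoc, hUorth, Matrix.one_mul,
      Matrix.mul_assoc, hVorth, Matrix.mul_one]
  have key : ∀ t, σ t i = ∑ a, ∑ b, U t a i * (W t a b * V t b i) := by
    intro t
    have h := congrFun (congrFun (hD t) i) i
    simp only [Matrix.mul_apply, Matrix.transpose_apply, Matrix.diagonal_apply_eq] at h
    rw [← h]
    rw [show (∑ a, ∑ b, U t a i * (W t a b * V t b i))
        = ∑ b, ∑ a, U t a i * (W t a b * V t b i) from Finset.sum_comm]
    apply Finset.sum_congr rfl; intro b _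
    rw [Finset.sum_mul]; apply Finset.sum_congr rfl; intro a _; ring
  -- derivative of the sum expression
  have hsum : HasDerivAt (fun t => ∑ a, ∑ b, U t a i * (W t a b * V t b i))
      (∑ a, ∑ b, (U' a i * (W t₀ a b * V t₀ b i) +
        U t₀ a i * (W' a b * V t₀ b i + W t₀ a b * V' b i))) t₀ := by
    refine HasDerivAt.fun_sum fun a _ => HasDerivAt.fun_sum fun b _ => ?_
    exact (hasDerivAt_entry hU a i).mul ((hasDerivAt_entry hW a b).mul (hasDerivAt_entry hV b i))
  have heq : σ' i = ∑ a, ∑ b, (U' a i * (W t₀ a b * V t₀ b i) +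
      U t₀ a i * (W' a b * V t₀ b i + W t₀ a b * V' b i)) := by
    have h1 : HasDerivAt (fun t => σ t i) (∑ a, ∑ b, (U' a i * (W t₀ a b * V t₀ b i) +
        U t₀ a i * (W' a b * V t₀ b i + W t₀ a b * V' b i))) t₀ := by
      have : (fun t => σ t i) = fun t => ∑ a, ∑ b, U t a i * (W t a b * V t b i) :=
        funext fun t => key t
      rw [this]; exact hsum
    exact (hσ i).unique h1
  -- zero lemmas
  have hZU : ∑ a, U' a i * U t₀ a i = 0 := by
    have hc : ∀ t, ∑ a, U t a i * U t a i = 1 := by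
      intro t
      have h := congrFun (congrFun (hUorth t) i) i
      simpa [Matrix.mul_apply, Matrix.transpose_apply, Matrix.one_apply] using h
    have hd : HasDerivAt (fun t => ∑ a, U t a i * U t a i)
        (∑ a, (U' a i * U t₀ a i + U t₀ a i * U' a i)) t₀ :=
      HasDerivAt.fun_sum fun a _ => (hasDerivAt_entry hU a i).mul (hasDerivAt_entry hU a i)
    have hconst : HasDerivAt (fun t => ∑ a, U t a i * U t a i) 0 t₀ := by
      have : (fun t => ∑ a, U t a i * U t a i) = fun _ => (1:ℝ) := funext hc
      rw [this]; exact hasDerivAt_const _ _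
    have h0 : ∑ a, (U' a i * U t₀ a i + U t₀ a i * U' a i) = 0 := hd.unique hconst
    have : (2:ℝ) * ∑ a, U' a i * U t₀ a i = 0 := by
      rw [← h0, Finset.mul_sum]; apply Finset.sum_congr rfl; intro a _; ring
    linarith
  have hZV : ∑ b, V' b i * V t₀ b i = 0 := by
    have hc : ∀ t, ∑ b, V t b i * V t b i = 1 := by
      intro t
      have h := congrFun (congrFun (hVorth t) i) i
      simpa [Matrix.mul_apply, Matrix.transpose_apply, Matrix.one_apply] using h
    have hd : HasDerivAt (fun t => ∑ b, V t b i * V t b i)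
        (∑ b, (V' b i * V t₀ b i + V t₀ b i * V' b i)) t₀ :=
      HasDerivAt.fun_sum fun b _ => (hasDerivAt_entry hV b i).mul (hasDerivAt_entry hV b i)
    have hconst : HasDerivAt (fun t => ∑ b, V t b i * V t b i) 0 t₀ := by
      have : (fun t => ∑ b, V t b i * V t b i) = fun _ => (1:ℝ) := funext hc
      rw [this]; exact hasDerivAt_const _ _
    have h0 : ∑ b, (V' b i * V t₀ b i + V t₀ b i * V' b i) = 0 := hd.unique hconst
    have : (2:ℝ) * ∑ b, V' b i * V t₀ b i = 0 := by
      rw [← h0, Finset.mul_sum]; apply Finset.sum_congr rfl; intro b _; ring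
    linarith
  -- structural identities
  have hWV : ∀ a, ∑ b, W t₀ a b * V t₀ b i = U t₀ a i * σ t₀ i := by
    intro a
    have h : W t₀ * V t₀ = U t₀ * Matrix.diagonal (σ t₀) := by
      rw [hsvd t₀, Matrix.mul_assoc, hVorth, Matrix.mul_one]
    have h2 := congrFun (congrFun h a) i
    rw [Matrix.mul_diagonal] at h2
    simpa [Matrix.mul_apply] using h2
  have hUW : ∀ b, ∑ a, U t₀ a i * W t₀ a b = σ t₀ i * V t₀ b i := by
    intro b
    have h : (U t₀)ᵀ * W t₀ = Matrix.diagonal (σ t₀) * (V t₀)ᵀ := by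
      rw [hsvd t₀, ← Matrix.mul_assoc, ← Matrix.mul_assoc, hUorth, Matrix.one_mul]
    have h2 := congrFun (congrFun h i) b
    rw [Matrix.diagonal_mul] at h2
    simpa [Matrix.mul_apply, Matrix.transpose_apply] using h2
  rw [heq]
  simp only [mul_add, Finset.sum_add_distrib]
  have T1 : ∑ a, ∑ b, U' a i * (W t₀ a b * V t₀ b i) = 0 := by
    calc ∑ a, ∑ b, U' a i * (W t₀ a b * V t₀ b i)
        = ∑ a, U' a i * ∑ b, W t₀ a b * V t₀ b i := by
          apply Finset.sum_congr rfl; intro a _; rw [Finset.mul_sum]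
      _ = ∑ a, U' a i * (U t₀ a i * σ t₀ i) := by
          apply Finset.sum_congr rfl; intro a _; rw [hWV a]
      _ = σ t₀ i * ∑ a, U' a i * U t₀ a i := by
          rw [Finset.mul_sum]; apply Finset.sum_congr rfl; intro a _; ring
      _ = 0 := by rw [hZU]; ring
  have T3 : ∑ a, ∑ b, U t₀ a i * (W t₀ a b * V' b i) = 0 := by
    calc ∑ a, ∑ b, U t₀ a i * (W t₀ a b * V' b i)
        = ∑ b, (∑ a, U t₀ a i * W t₀ a b) * V' b i := by
          rw [Finset.sum_comm]; apply Finset.sum_congr rfl; intro b _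
          rw [Finset.sum_mul]; apply Finset.sum_congr rfl; intro a _; ring
      _ = ∑ b, (σ t₀ i * V t₀ b i) * V' b i := by
          apply Finset.sum_congr rfl; intro b _; rw [hUW b]
      _ = σ t₀ i * ∑ b, V' b i * V t₀ b i := by
          rw [Finset.mul_sum]; apply Finset.sum_congr rfl; intro b _; ring
      _ = 0 := by rw [hZV]; ring
  have T2 : ∑ a, ∑ b, U t₀ a i * (W' a b * V t₀ b i)
      = (fun a => U t₀ a i) ⬝ᵥ W'.mulVec (fun b => V t₀ b i) := by
    simp [dotProduct, Matrix.mulVec, Finset.mul_sum]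
  rw [T1, T3, zero_add, add_zero, T2]
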